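/- arXiv:1605.01352 — 2 statements merged into one kernel-verified Lean document; each statement's English description precedes it below -/
import Mathlib

section
/- Let T be a definitional tree of an operation f (a finite partial definitional tree whose root pattern is f x1 ... xn with distinct variables). Then the patterns occurring at the leaves of T are exhaustive and mutually exclusive: for every ground f-rooted pattern p, there exists exactly one leaf of T whose pattern matches p. -/
/-!  A formalization of constructor-based term rewriting with definitional
trees, following Antoy's definitions.  Constructor and operation symbols are
natural numbers (disjoint by construction, since terms distinguish them);
constructors are grouped into types via `ctorType`. -/

/-- A signature: constructors (with type, arity and argument types) and
operations (with arity, argument types and result type). -/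
structure Sig where
  ctorType : ℕ → ℕ
  ctorArity : ℕ → ℕ
  ctorArgTy : ℕ → ℕ → ℕ
  opArity : ℕ → ℕ
  opArgTy : ℕ → ℕ → ℕ
  opResTy : ℕ → ℕ

namespace FLP

/-- Terms: variables (name and type annotation), constructor applications and
operation applications. -/
inductive Tm where
  | var : ℕ → ℕ → Tm
  | con : ℕ → List Tm → Tm
  | op  : ℕ → List Tm → Tm

/-- A substitution maps a variable (name and type) to a term. -/
def Subst := ℕ → ℕ → Tm

/-- Applying a substitution to a term. -/
def applySubst (σ : Subst) : Tm → Tm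
  | .var v ty => σ v ty
  | .con c ts => .con c (ts.attach.map fun t => applySubst σ t.1)
  | .op f ts  => .op f (ts.attach.map fun t => applySubst σ t.1)
decreasing_by
  all_goals (have h := List.sizeOf_lt_of_mem t.2; simp at h ⊢; omega)

/-- The list of variables (name, type) occurring in a term. -/
def varsOf : Tm → List (ℕ × ℕ)
  | .var v ty => [(v, ty)]
  | .con _ ts => ts.attach.flatMap fun t => varsOf t.1
  | .op _ ts  => ts.attach.flatMap fun t => varsOf t.1
decreasing_by
  all_goals (have h := List.sizeOf_lt_of_mem t.2; simp at h ⊢; omega)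

/-- Ground terms: terms without variables. -/
inductive Ground : Tm → Prop
  | con : ∀ c ts, (∀ t ∈ ts, Ground t) → Ground (.con c ts)
  | op  : ∀ f ts, (∀ t ∈ ts, Ground t) → Ground (.op f ts)

/-- Constructor terms: built from variables and constructor symbols only. -/
inductive CTerm : Tm → Prop
  | var : ∀ v ty, CTerm (.var v ty)
  | con : ∀ c ts, (∀ t ∈ ts, CTerm t) → CTerm (.con c ts)

/-- The typing judgment for terms. -/
inductive HasTy (S : Sig) : Tm → ℕ → Prop
  | var : ∀ v ty, HasTy S (.var v ty) ty
  | con : ∀ c ts, ts.length = S.ctorArity c →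
      (∀ i (h : i < ts.length), HasTy S ts[i] (S.ctorArgTy c i)) →
      HasTy S (.con c ts) (S.ctorType c)
  | op : ∀ f ts, ts.length = S.opArity f →
      (∀ i (h : i < ts.length), HasTy S ts[i] (S.opArgTy f i)) →
      HasTy S (.op f ts) (S.opResTy f)

/-- An `f`-rooted pattern: a linear, well-typed term `f t1 ... tn` whose
arguments are constructor terms. -/
def IsPat (S : Sig) (f : ℕ) (p : Tm) : Prop :=
  (∃ ts, p = .op f ts ∧ ∀ t ∈ ts, CTerm t) ∧
  ((varsOf p).map Prod.fst).Nodup ∧ HasTy S p (S.opResTy f)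

/-- A ground `f`-rooted pattern. -/
def IsGroundPat (S : Sig) (f : ℕ) (p : Tm) : Prop :=
  IsPat S f p ∧ Ground p

/-- `q` matches `p` iff `p` is a substitution instance of `q`. -/
def Matches (q p : Tm) : Prop := ∃ σ : Subst, applySubst σ q = p

/-- `q` unifies with `e` iff they have a common instance. -/
def Unifies (q e : Tm) : Prop :=
  ∃ σ τ : Subst, applySubst σ q = applySubst τ e

/-- The substitution replacing the variable named `x` by `t`. -/
def single (x : ℕ) (t : Tm) : Subst := fun v ty =>
  if v = x then t else .var v ty

/-- The substitution mapping the variables named by `xs` to the corresponding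
terms of `ts`. -/
def substOf (xs : List ℕ) (ts : List Tm) : Subst := fun v ty =>
  match xs.findIdx? (· = v) with
  | some i => ts.getD i (.var v ty)
  | none => .var v ty

/-- Partial definitional trees: rule nodes `rule(p = r)`, exempt nodes
`exempt(p)`, and branch nodes storing their pattern, the name of the
inductive variable, and one (constructor, subtree) pair per constructor of
the type of the inductive variable. -/
inductive DTree where
  | rule : Tm → Tm → DTree
  | exempt : Tm → DTree
  | branch : Tm → ℕ → List (ℕ × DTree) → DTree

/-- The pattern of the root node of a partial definitional tree. -/
def DTree.pat : DTree → Tm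
  | .rule p _ => p
  | .exempt p => p
  | .branch p _ _ => p

/-- The patterns of the leaves of a partial definitional tree. -/
def DTree.leafPats : DTree → List Tm
  | .rule p _ => [p]
  | .exempt p => [p]
  | .branch _ _ cs => cs.attach.flatMap fun ct => ct.1.2.leafPats
decreasing_by
  all_goals (obtain ⟨⟨c', T'⟩, hm⟩ := ct;
             have h := List.sizeOf_lt_of_mem hm; simp at h ⊢; omega)

/-- The patterns (left-hand sides) of the rule nodes. -/
def DTree.rulePats : DTree → List Tm
  | .rule p _ => [p]
  | .exempt _ => []
  | .branch _ _ cs => cs.attach.flatMap fun ct => ct.1.2.rulePats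
decreasing_by
  all_goals (obtain ⟨⟨c', T'⟩, hm⟩ := ct;
             have h := List.sizeOf_lt_of_mem hm; simp at h ⊢; omega)

/-- The patterns of the exempt nodes. -/
def DTree.exemptPats : DTree → List Tm
  | .rule _ _ => []
  | .exempt p => [p]
  | .branch _ _ cs => cs.attach.flatMap fun ct => ct.1.2.exemptPats
decreasing_by
  all_goals (obtain ⟨⟨c', T'⟩, hm⟩ := ct;
             have h := List.sizeOf_lt_of_mem hm; simp at h ⊢; omega)

/-- The rules contained in the rule nodes. -/
def DTree.rules : DTree → List (Tm × Tm)
  | .rule p r => [(p, r)]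
  | .exempt _ => []
  | .branch _ _ cs => cs.attach.flatMap fun ct => ct.1.2.rules
decreasing_by
  all_goals (obtain ⟨⟨c', T'⟩, hm⟩ := ct;
             have h := List.sizeOf_lt_of_mem hm; simp at h ⊢; omega)

/-- Well-formed partial definitional trees w.r.t. a signature: at a branch
node with pattern `p` and inductive variable `x` (of type `ty`, occurring in
`p`), there is exactly one child per constructor `c` of type `ty`, whose
pattern is obtained from `p` by substituting `x` with `c` applied to fresh
pairwise distinct variables. -/
inductive WF (S : Sig) : DTree → Prop
  | rule : ∀ p r, WF S (.rule p r)
  | exempt : ∀ p, WF S (.exempt p)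
  | branch : ∀ p x ty (cs : List (ℕ × DTree)),
      (x, ty) ∈ varsOf p →
      (cs.map Prod.fst).Nodup →
      (∀ c, c ∈ cs.map Prod.fst ↔ S.ctorType c = ty) →
      (∀ ct ∈ cs, ∃ fresh : List (ℕ × ℕ),
          (fresh.map Prod.fst).Nodup ∧
          fresh.length = S.ctorArity ct.1 ∧
          (∀ i (h : i < fresh.length), fresh[i].2 = S.ctorArgTy ct.1 i) ∧
          (∀ v ∈ fresh, v.1 ∉ (varsOf p).map Prod.fst) ∧
          (Prod.snd ct).pat =
            applySubst (single x (.con ct.1 (fresh.map fun v => Tm.var v.1 v.2))) p) →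
      (∀ ct ∈ cs, WF S (Prod.snd ct)) →
      WF S (.branch p x cs)

/-- A definitional tree of the operation `f`: a well-formed partial
definitional tree whose root pattern is `f x1 ... xn` with pairwise distinct
(appropriately typed) variables. -/
def IsDTreeOf (S : Sig) (f : ℕ) (T : DTree) : Prop :=
  WF S T ∧
  ∃ xs : List (ℕ × ℕ),
    (xs.map Prod.fst).Nodup ∧
    xs.length = S.opArity f ∧
    (∀ i (h : i < xs.length), xs[i].2 = S.opArgTy f i) ∧
    T.pat = .op f (xs.map fun v => Tm.var v.1 v.2)

/-- `Subtree N T` : `N` is a node (subtree) of `T`. -/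
inductive Subtree : DTree → DTree → Prop
  | refl : ∀ T, Subtree T T
  | branch : ∀ p x cs ct N, ct ∈ cs → Subtree N (Prod.snd ct) →
      Subtree N (.branch p x cs)

/-- A tree has a rule node (somewhere, including its root). -/
inductive HasRule : DTree → Prop
  | rule : ∀ p r, HasRule (.rule p r)
  | branch : ∀ p x cs ct, ct ∈ cs → HasRule (Prod.snd ct) →
      HasRule (.branch p x cs)

/-- A definitional tree is minimal iff there is some rule node below any
branch node of the tree. -/
def Minimal (T : DTree) : Prop :=
  ∀ p x cs, Subtree (.branch p x cs) T → HasRule (.branch p x cs)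


/-! ### Auxiliary lemmas -/

/-- Custom induction principle for `Tm`. -/
theorem Tm.my_ind {P : Tm → Prop}
    (hv : ∀ v ty, P (.var v ty))
    (hc : ∀ c ts, (∀ t ∈ ts, P t) → P (.con c ts))
    (ho : ∀ f ts, (∀ t ∈ ts, P t) → P (.op f ts)) : ∀ t, P t
  | .var v ty => hv v ty
  | .con c ts => hc c ts (fun t ht => Tm.my_ind hv hc ho t)
  | .op f ts => ho f ts (fun t ht => Tm.my_ind hv hc ho t)
decreasing_by
  all_goals (have h := List.sizeOf_lt_of_mem ht; simp at h ⊢; omega)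

@[simp] theorem applySubst_var (σ : Subst) (v ty : ℕ) :
    applySubst σ (.var v ty) = σ v ty := by rw [applySubst]

@[simp] theorem applySubst_con (σ : Subst) (c : ℕ) (ts : List Tm) :
    applySubst σ (.con c ts) = .con c (ts.map (applySubst σ)) := by
  rw [applySubst]; simp [List.attach_map_val]

@[simp] theorem applySubst_op (σ : Subst) (f : ℕ) (ts : List Tm) :
    applySubst σ (.op f ts) = .op f (ts.map (applySubst σ)) := by
  rw [applySubst]; simp [List.attach_map_val]

@[simp] theorem varsOf_var (v ty : ℕ) : varsOf (.var v ty) = [(v, ty)] := by rw [varsOf]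

@[simp] theorem varsOf_con (c : ℕ) (ts : List Tm) :
    varsOf (.con c ts) = ts.flatMap varsOf := by
  rw [varsOf]; simp [List.attach_map_val]

@[simp] theorem varsOf_op (f : ℕ) (ts : List Tm) :
    varsOf (.op f ts) = ts.flatMap varsOf := by
  rw [varsOf]; simp [List.attach_map_val]

theorem map_eq_map_mem {α β : Type*} {l : List α} {f g : α → β}
    (h : l.map f = l.map g) : ∀ a ∈ l, f a = g a := by
  induction l with
  | nil => simp
  | cons a l ih => simp only [List.map_cons, List.cons.injEq] at h; simp_all

/-- Congruence: substitutions agreeing on the variables of `t` yield equal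
instances. -/
theorem applySubst_congr {σ τ : Subst} : ∀ {t : Tm},
    (∀ v vt, (v, vt) ∈ varsOf t → σ v vt = τ v vt) →
    applySubst σ t = applySubst τ t := by
  intro t
  induction t using Tm.my_ind with
  | hv v ty => intro h; simpa using h v ty (by simp)
  | hc c ts ih =>
      intro h; simp only [applySubst_con, Tm.con.injEq, true_and]
      exact List.map_congr_left fun t ht => ih t ht fun v vt hv =>
        h v vt (by simp [List.mem_flatMap]; exact ⟨t, ht, hv⟩)
  | ho f ts ih =>
      intro h; simp only [applySubst_op, Tm.op.injEq, true_and]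
      exact List.map_congr_left fun t ht => ih t ht fun v vt hv =>
        h v vt (by simp [List.mem_flatMap]; exact ⟨t, ht, hv⟩)

/-- Converse: equal instances force agreement on the variables. -/
theorem applySubst_eq_vars {σ τ : Subst} : ∀ {t : Tm},
    applySubst σ t = applySubst τ t →
    ∀ v vt, (v, vt) ∈ varsOf t → σ v vt = τ v vt := by
  intro t
  induction t using Tm.my_ind with
  | hv v ty => intro h v' vt' hm; simp at h hm; obtain ⟨rfl, rfl⟩ := hm; simpa using h
  | hc c ts ih =>
      intro h v vt hm
      simp only [applySubst_con, Tm.con.injEq, true_and] at h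
      simp only [varsOf_con, List.mem_flatMap] at hm
      obtain ⟨t, ht, hv⟩ := hm
      exact ih t ht (map_eq_map_mem h t ht) v vt hv
  | ho f ts ih =>
      intro h v vt hm
      simp only [applySubst_op, Tm.op.injEq, true_and] at h
      simp only [varsOf_op, List.mem_flatMap] at hm
      obtain ⟨t, ht, hv⟩ := hm
      exact ih t ht (map_eq_map_mem h t ht) v vt hv

/-- Composition of substitutions. -/
theorem applySubst_comp (σ τ : Subst) : ∀ t : Tm,
    applySubst σ (applySubst τ t) =
      applySubst (fun v vt => applySubst σ (τ v vt)) t := by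
  intro t
  induction t using Tm.my_ind with
  | hv v ty => exact (congrArg (applySubst σ) (applySubst_var τ v ty)).trans (applySubst_var (fun v vt => applySubst σ (τ v vt)) v ty).symm
  | hc c ts ih => simp only [applySubst_con, applySubst_con (fun v vt => applySubst σ (τ v vt)), List.map_map]
                  exact congrArg _ (List.map_congr_left fun t ht => ih t ht)
  | ho f ts ih => simp only [applySubst_op, applySubst_op (fun v vt => applySubst σ (τ v vt)), List.map_map]
                  exact congrArg _ (List.map_congr_left fun t ht => ih t ht)

/-- Variables of an instance. -/
theorem varsOf_applySubst (σ : Subst) : ∀ t : Tm,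
    varsOf (applySubst σ t) = (varsOf t).flatMap (fun w => varsOf (σ w.1 w.2)) := by
  intro t
  induction t using Tm.my_ind with
  | hv v ty => simp
  | hc c ts ih =>
      simp only [applySubst_con, varsOf_con, List.flatMap_map, List.flatMap_assoc]
      exact List.flatMap_congr fun t ht => ih t ht
  | ho f ts ih =>
      simp only [applySubst_op, varsOf_op, List.flatMap_map, List.flatMap_assoc]
      exact List.flatMap_congr fun t ht => ih t ht

/-- In a list of pairs with nodup first components, the first component
determines the pair. -/
theorem eq_snd_of_nodup_fst {α β : Type*} {l : List (α × β)}
    (h : (l.map Prod.fst).Nodup) {a : α} {b b' : β}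
    (h1 : (a, b) ∈ l) (h2 : (a, b') ∈ l) : b = b' :=
  congrArg Prod.snd (List.inj_on_of_nodup_map h (x := (a,b)) (y := (a,b')) h1 h2 rfl)

theorem findIdx?_nodup {l : List ℕ} (h : l.Nodup) :
    ∀ i (hi : i < l.length), l.findIdx? (· = l[i]) = some i := by
  induction l with
  | nil => simp
  | cons a l ih =>
      intro i hi
      cases i with
      | zero => simp [List.findIdx?_cons]
      | succ i =>
          have hi' : i < l.length := by simpa using hi
          have hne : a ≠ l[i] := by
            intro he; exact (List.nodup_cons.1 h).1 (he ▸ List.getElem_mem hi')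
          simp [List.findIdx?_cons, hne, ih (List.nodup_cons.1 h).2 i hi']

theorem findIdx?_eq_none_of_not_mem {l : List ℕ} {v : ℕ} (h : v ∉ l) :
    l.findIdx? (· = v) = none := by
  rw [List.findIdx?_eq_none_iff]
  intro x hx
  simp only [decide_eq_false_iff_not]
  rintro rfl; exact h hx

theorem flatMap_attach' {α β : Type*} (l : List α) (f : α → List β) :
    (l.attach.flatMap fun a => f a.1) = l.flatMap f := by
  simp [List.flatMap_def, List.attach_map_val]

@[simp] theorem applySubst_id : ∀ t : Tm, applySubst (fun v ty => .var v ty) t = t := by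
  intro t
  induction t using Tm.my_ind with
  | hv v ty => exact applySubst_var _ v ty
  | hc c ts ih => simp only [applySubst_con (fun v ty => .var v ty), Tm.con.injEq, true_and]
                  exact List.map_congr_left ih |>.trans (List.map_id _)
  | ho f ts ih => simp only [applySubst_op (fun v ty => .var v ty), Tm.op.injEq, true_and]
                  exact List.map_congr_left ih |>.trans (List.map_id _)

@[simp] theorem leafPats_branch (p : Tm) (x : ℕ) (cs : List (ℕ × DTree)) :
    (DTree.branch p x cs).leafPats = cs.flatMap (fun ct => ct.2.leafPats) := by
  rw [DTree.leafPats]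
  exact flatMap_attach' cs (fun ct => ct.2.leafPats)

/-- Every leaf pattern is an instance of the root pattern. -/
theorem matches_pat_of_leaf {S : Sig} {T : DTree} (hWF : WF S T) :
    ∀ q ∈ T.leafPats, Matches T.pat q := by
  induction hWF with
  | rule p r => intro q hq; simp [DTree.leafPats] at hq; subst hq
                exact ⟨fun v ty => .var v ty, applySubst_id _⟩
  | exempt p => intro q hq; simp [DTree.leafPats] at hq; subst hq
                exact ⟨fun v ty => .var v ty, applySubst_id _⟩
  | branch p x ty cs hx hnd hexh hpat hwf ih =>
      intro q hq
      simp only [leafPats_branch, List.mem_flatMap] at hq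
      obtain ⟨ct, hct, hq⟩ := hq
      obtain ⟨ρ, hρ⟩ := ih ct hct q hq
      obtain ⟨fresh, -, -, -, -, hpe⟩ := hpat ct hct
      refine ⟨fun v vt => applySubst ρ (single x
        (.con ct.1 (fresh.map fun w => Tm.var w.1 w.2)) v vt), ?_⟩
      rw [← applySubst_comp]
      show applySubst ρ (applySubst _ p) = q
      rw [← hpe]; exact hρ


/-- Key lemma: for a well-formed tree whose root pattern has type-consistent
variables, and any substitution mapping these variables to ground, well-typed
constructor terms, exactly one leaf pattern matches the resulting instance. -/
theorem main_lemma (S : Sig) {T : DTree} (hWF : WF S T) :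
    ∀ σ : Subst,
    (∀ v vt vt', (v, vt) ∈ varsOf T.pat → (v, vt') ∈ varsOf T.pat → vt = vt') →
    (∀ v vt, (v, vt) ∈ varsOf T.pat →
      Ground (σ v vt) ∧ CTerm (σ v vt) ∧ HasTy S (σ v vt) vt) →
    ∃! q, q ∈ T.leafPats ∧ Matches q (applySubst σ T.pat) := by
  induction hWF with
  | rule p r =>
      intro σ _ _
      exact ⟨p, ⟨by simp [DTree.leafPats], ⟨σ, rfl⟩⟩,
        by rintro q ⟨hq, -⟩; simpa [DTree.leafPats] using hq⟩
  | exempt p =>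
      intro σ _ _
      exact ⟨p, ⟨by simp [DTree.leafPats], ⟨σ, rfl⟩⟩,
        by rintro q ⟨hq, -⟩; simpa [DTree.leafPats] using hq⟩
  | branch p x ty cs hx hnd hexh hpat hwf ih =>
      intro σ hcons henr
      simp only [DTree.pat] at hcons henr ⊢
      obtain ⟨hg, hc, hty⟩ := henr x ty hx
      -- `σ x ty` is a ground constructor term
      obtain ⟨cc, us, he, husc, husg⟩ :
          ∃ cc us, σ x ty = .con cc us ∧ (∀ t ∈ us, CTerm t) ∧ (∀ t ∈ us, Ground t) := by
        generalize hw : σ x ty = w at hg hc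
        cases hc with
        | var v t => cases hg
        | con cc us h => cases hg with | con _ _ hg' => exact ⟨cc, us, rfl, h, hg'⟩
      rw [he] at hty
      -- typing facts
      have hccty : S.ctorType cc = ty := by cases hty; rfl
      have hlen : us.length = S.ctorArity cc := by cases hty with | con _ _ h1 h2 => exact h1
      have harg : ∀ i (h : i < us.length), HasTy S us[i] (S.ctorArgTy cc i) := by
        cases hty with | con _ _ h1 h2 => exact h2
      -- the child for constructor `cc`
      obtain ⟨ct, hmem, hfst⟩ := List.mem_map.1 ((hexh cc).2 hccty)
      obtain ⟨fresh, hfnd, hflen, hfty, hfdisj, hpe⟩ := hpat ct hmem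
      rw [hfst] at hflen
      set tcon : Tm := .con ct.1 (fresh.map fun w => Tm.var w.1 w.2) with htcon
      set freshNames := fresh.map Prod.fst with hfnames
      -- the matching substitution for the child pattern
      set σ' : Subst := fun v vt =>
        match freshNames.findIdx? (· = v) with
        | some i => us.getD i (.var v vt)
        | none => σ v vt with hσ'
      have hlen2 : fresh.length = us.length := by rw [hlen, hflen]
      have hσ'fresh : ∀ i (hi : i < fresh.length) (vt : ℕ),
          σ' fresh[i].1 vt = us[i]'(hlen2 ▸ hi) := by
        intro i hi vt
        have h1 : freshNames.findIdx? (· = fresh[i].1) = some i := by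
          have := findIdx?_nodup hfnd i (by simpa [hfnames] using hi)
          simpa [hfnames] using this
        simp only [hσ', h1]
        exact List.getD_eq_getElem _ _ (hlen2 ▸ hi)
      have hσ'old : ∀ v vt, v ∉ freshNames → σ' v vt = σ v vt := by
        intro v vt hv
        simp only [hσ', findIdx?_eq_none_of_not_mem hv]
      have hpmem_not_fresh : ∀ v, v ∈ (varsOf p).map Prod.fst → v ∉ freshNames := by
        intro v hv hvf
        obtain ⟨w, hw, rfl⟩ := List.mem_map.1 hvf
        exact hfdisj w hw hv
      -- applying σ' to the fresh constructor term gives `σ x ty`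
      have happ : applySubst σ' tcon = .con cc us := by
        rw [htcon, applySubst_con, List.map_map, hfst]
        refine congrArg _ (List.ext_getElem (by simpa using hlen2) ?_)
        intro i h1 h2
        simp only [List.getElem_map, Function.comp_apply, applySubst_var]
        exact hσ'fresh i (by simpa using h1) _
      -- the child pattern instantiated by σ' gives the original instance
      have hchild : applySubst σ' ct.2.pat = applySubst σ p := by
        rw [hpe, applySubst_comp]
        refine applySubst_congr ?_
        intro v vt hv
        by_cases hvx : v = x
        · have hvt : vt = ty := hcons v vt ty hv (by rw [hvx]; exact hx)
          have hs : single x tcon v vt = tcon := if_pos hvx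
          rw [hs, happ, hvx, hvt, he]
        · simp only [single, if_neg hvx, applySubst_var]
          exact hσ'old v vt (hpmem_not_fresh v (List.mem_map_of_mem (f := Prod.fst) hv))
      -- variables of the child pattern
      have hvtcon : varsOf tcon = fresh := by
        simp [htcon, List.flatMap_map]
      have hvarssub : ∀ w ∈ varsOf ct.2.pat, w ∈ fresh ∨ (w ∈ varsOf p ∧ w.1 ≠ x) := by
        intro w hw
        rw [hpe, varsOf_applySubst] at hw
        obtain ⟨u, hu, hw⟩ := List.mem_flatMap.1 hw
        by_cases hux : u.1 = x
        · left; rwa [single, if_pos hux, hvtcon] at hw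
        · right
          rw [single, if_neg hux, varsOf_var] at hw
          simp only [List.mem_singleton] at hw
          subst hw; exact ⟨hu, hux⟩
      have hcons' : ∀ v vt vt', (v, vt) ∈ varsOf ct.2.pat → (v, vt') ∈ varsOf ct.2.pat →
          vt = vt' := by
        intro v vt vt' h1 h2
        rcases hvarssub _ h1 with h1' | ⟨h1', h1x⟩ <;>
          rcases hvarssub _ h2 with h2' | ⟨h2', h2x⟩
        · exact eq_snd_of_nodup_fst hfnd h1' h2'
        · exact absurd (List.mem_map_of_mem (f := Prod.fst) h2')
            (fun hm => hpmem_not_fresh v hm (List.mem_map_of_mem (f := Prod.fst) h1'))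
        · exact absurd (List.mem_map_of_mem (f := Prod.fst) h1')
            (fun hm => hpmem_not_fresh v hm (List.mem_map_of_mem (f := Prod.fst) h2'))
        · exact hcons v vt vt' h1' h2'
      have henr' : ∀ v vt, (v, vt) ∈ varsOf ct.2.pat →
          Ground (σ' v vt) ∧ CTerm (σ' v vt) ∧ HasTy S (σ' v vt) vt := by
        intro v vt hv
        rcases hvarssub _ hv with hf | ⟨hp, -⟩
        · obtain ⟨i, hi, hie⟩ := List.mem_iff_getElem.1 hf
          have hv1 : fresh[i].1 = v := by rw [hie]
          have hv2 : fresh[i].2 = vt := by rw [hie]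
          have : σ' v vt = us[i]'(hlen2 ▸ hi) := by rw [← hv1]; exact hσ'fresh i hi vt
          rw [this]
          have hmu : us[i]'(hlen2 ▸ hi) ∈ us := List.getElem_mem _
          refine ⟨husg _ hmu, husc _ hmu, ?_⟩
          have : vt = S.ctorArgTy cc i := by
            rw [← hv2, hfty i hi, hfst]
          rw [this]
          exact harg i (hlen2 ▸ hi)
        · rw [hσ'old v vt (hpmem_not_fresh v (List.mem_map_of_mem (f := Prod.fst) hp))]
          exact henr v vt hp
      -- apply the induction hypothesis to the child
      have hIH := ih ct hmem σ' hcons' henr'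
      rw [hchild] at hIH
      obtain ⟨w, ⟨hwmem, hwm⟩, hwuniq⟩ := hIH
      refine ⟨w, ⟨?_, hwm⟩, ?_⟩
      · rw [leafPats_branch]
        exact List.mem_flatMap.2 ⟨ct, hmem, hwmem⟩
      · rw [leafPats_branch]
        rintro q ⟨hqmem, hqm⟩
        obtain ⟨ct', hmem', hq'⟩ := List.mem_flatMap.1 hqmem
        -- the leaf `q` lies in child `ct'`; show `ct' = ct`
        obtain ⟨ρ1, hρ1⟩ := matches_pat_of_leaf (hwf ct' hmem') q hq'
        obtain ⟨ρ2, hρ2⟩ := id hqm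
        obtain ⟨fresh', hfnd', hflen', hfty', hfdisj', hpe'⟩ := hpat ct' hmem'
        have hcomp : applySubst (fun v vt =>
            applySubst ρ2 (applySubst ρ1
              (single x (.con ct'.1 (fresh'.map fun w => Tm.var w.1 w.2)) v vt))) p
            = applySubst σ p := by
          have e1 := applySubst_comp ρ1 (single x (.con ct'.1 (fresh'.map fun w => Tm.var w.1 w.2))) p
          have e2 := applySubst_comp ρ2 (fun v vt => applySubst ρ1
            (single x (.con ct'.1 (fresh'.map fun w => Tm.var w.1 w.2)) v vt)) p
          rw [← hρ2, ← hρ1, hpe', e1]; exact e2.symm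
        have hxval := applySubst_eq_vars hcomp x ty hx
        rw [single, if_pos rfl, he, applySubst_con, applySubst_con] at hxval
        have hcc' : ct'.1 = cc := by
          injection hxval with h1 h2
        have hcteq : ct' = ct := by
          have h2 : ct'.2 = ct.2 :=
            eq_snd_of_nodup_fst hnd
              (show (cc, ct'.2) ∈ cs by rw [← hcc']; exact hmem')
              (show (cc, ct.2) ∈ cs by rw [← hfst]; exact hmem)
          exact Prod.ext (hcc'.trans hfst.symm) h2
        subst hcteq
        exact hwuniq q ⟨hq', hqm⟩

/-- Uniqueness: the leaf patterns of a definitional tree of `f`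
are exhaustive and mutually exclusive: every ground `f`-rooted pattern is
matched by exactly one leaf pattern. -/
theorem leafPats_exhaustive_mutually_exclusive (S : Sig) (f : ℕ) (T : DTree)
    (hT : IsDTreeOf S f T) :
    ∀ p, IsGroundPat S f p → ∃! q, q ∈ T.leafPats ∧ Matches q p := by
  obtain ⟨hWF, xs, hxnd, hxlen, hxty, hroot⟩ := hT
  rintro p ⟨⟨⟨ps, rfl, hpsC⟩, -, htyp⟩, hground⟩
  have hpslen : ps.length = S.opArity f := by
    cases htyp with | op _ _ h1 h2 => exact h1
  have hpsty : ∀ i (h : i < ps.length), HasTy S ps[i] (S.opArgTy f i) := by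
    cases htyp with | op _ _ h1 h2 => exact h2
  have hpsg : ∀ t ∈ ps, Ground t := by
    cases hground with | op _ _ h => exact h
  have hvars : varsOf T.pat = xs := by
    rw [hroot]; simp [List.flatMap_map]
  set σ₀ : Subst := substOf (xs.map Prod.fst) ps with hσ₀
  have hlen2 : xs.length = ps.length := by rw [hxlen, hpslen]
  have hval : ∀ i (hi : i < xs.length) (vt : ℕ),
      σ₀ xs[i].1 vt = ps[i]'(hlen2 ▸ hi) := by
    intro i hi vt
    have h1 : (xs.map Prod.fst).findIdx? (· = xs[i].1) = some i := by
      have := findIdx?_nodup hxnd i (by simpa using hi)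
      simpa using this
    simp only [hσ₀, substOf, h1]
    exact List.getD_eq_getElem _ _ (hlen2 ▸ hi)
  have happly : applySubst σ₀ T.pat = .op f ps := by
    rw [hroot, applySubst_op, List.map_map]
    refine congrArg _ (List.ext_getElem (by simpa using hlen2) ?_)
    intro i h1 h2
    simp only [List.getElem_map, Function.comp_apply, applySubst_var]
    exact hval i (by simpa using h1) _
  have hcons : ∀ v vt vt', (v, vt) ∈ varsOf T.pat → (v, vt') ∈ varsOf T.pat → vt = vt' := by
    rw [hvars]; intro v vt vt' h1 h2; exact eq_snd_of_nodup_fst hxnd h1 h2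
  have henr : ∀ v vt, (v, vt) ∈ varsOf T.pat →
      Ground (σ₀ v vt) ∧ CTerm (σ₀ v vt) ∧ HasTy S (σ₀ v vt) vt := by
    rw [hvars]
    intro v vt hv
    obtain ⟨i, hi, hie⟩ := List.mem_iff_getElem.1 hv
    have hv1 : xs[i].1 = v := by rw [hie]
    have hv2 : xs[i].2 = vt := by rw [hie]
    have hvv : σ₀ v vt = ps[i]'(hlen2 ▸ hi) := by rw [← hv1]; exact hval i hi vt
    rw [hvv]
    have hmu : ps[i]'(hlen2 ▸ hi) ∈ ps := List.getElem_mem _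
    refine ⟨hpsg _ hmu, hpsC _ hmu, ?_⟩
    have : vt = S.opArgTy f i := by rw [← hv2, hxty i hi]
    rw [this]
    exact hpsty i (hlen2 ▸ hi)
  have := main_lemma S hWF σ₀ hcons henr
  rwa [happly] at this

end FLP
end

section
/- Let R be a program without default rules and R' its transformation with added default rules. If an expression e over R evaluates to a value t with respect to R' by a derivation that never applies a default rule (i.e., never applies an f'DFLT rule), then e evaluates to t with respect to R. Consequently, any value of e computed by R' is either computed by R or requires an application of a default rule. -/
/-- abstract rewriting model: every step of a default-rule-free
derivation in the transformed program `R'` is either a renaming step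
`f ts → f'INIT ts` (collapsed by the renaming map `φ`, which renames `f'INIT`
back to `f`) or a step `f'INIT ts → t'` whose image under `φ` is a
standard-rule step of `R`.  If an expression `e` of the original program
(`φ e = e`) evaluates to a value `t` (`φ t = t`) w.r.t. `R'` by a derivation
that never applies a default rule, then `e` evaluates to `t` w.r.t. `R`. -/
theorem default_free_derivation_sound {E : Type*}
    (R Rename Init : E → E → Prop) (φ : E → E)
    (hrename : ∀ a b, Rename a b → φ b = φ a)
    (hinit : ∀ a b, Init a b → R (φ a) (φ b))
    (e t : E) (he : φ e = e) (ht : φ t = t)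
    (hder : Relation.ReflTransGen (fun a b => Rename a b ∨ Init a b) e t) :
    Relation.ReflTransGen R e t := by
  have key : Relation.ReflTransGen R (φ e) (φ t) := by
    clear ht
    induction hder with
    | refl => exact .refl
    | tail _ hstep ih =>
      cases hstep with
      | inl h => rwa [hrename _ _ h]
      | inr h => exact ih.tail (hinit _ _ h)
  rwa [he, ht] at key
end
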